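/- arXiv:2001.11632 — 3 statements merged into one kernel-verified Lean document; each statement's English description precedes it below -/
import Mathlib

section
/- Let l be a prime, λ > 0 an integer, and let D and D' be negative integers with D ≡ 0 or 1 (mod 4), D' ≡ 0 or 1 (mod 4), and D = l^{2λ}·D'. Let f(x,y) = ax^2 + bxy + cy^2 be a primitive positive definite integral binary quadratic form of discriminant D (i.e., a, b, c ∈ ℤ with gcd(a,b,c) = 1, a > 0, and b^2 − 4ac = D). Then for every odd integer h with 1 ≤ h < 2λ+1, there are no integers x, y with f(x,y) = l^h. -/
private lemma sq_emod_four (n : ℤ) : n ^ 2 % 4 = 0 ∨ n ^ 2 % 4 = 1 := by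
  rcases Int.even_or_odd n with ⟨t, rfl⟩ | ⟨t, rfl⟩
  · have h4 : (4 : ℤ) ∣ (t + t) ^ 2 := ⟨t ^ 2, by ring⟩
    omega
  · have h4 : (4 : ℤ) ∣ (2 * t + 1) ^ 2 - 1 := ⟨t ^ 2 + t, by ring⟩
    omega

private lemma prime_pow_dvd_of_dvd_sq (p : ℕ) (hp : p.Prime) (k m : ℕ) (hkm : 2 * m ≤ k + 1)
    (B : ℤ) (hdvd : (p : ℤ) ^ k ∣ B ^ 2) : (p : ℤ) ^ m ∣ B := by
  rcases eq_or_ne B 0 with rfl | hB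
  · simp
  · have hn : B.natAbs ≠ 0 := by simpa using hB
    have h1 : p ^ k ∣ B.natAbs ^ 2 := by
      have := Int.natAbs_dvd_natAbs.mpr hdvd
      simpa [Int.natAbs_pow] using this
    have h2 : k ≤ (B.natAbs ^ 2).factorization p :=
      (Nat.Prime.pow_dvd_iff_le_factorization hp (pow_ne_zero 2 hn)).mp h1
    rw [Nat.factorization_pow] at h2
    simp only [Finsupp.smul_apply, smul_eq_mul] at h2
    have h3 : m ≤ B.natAbs.factorization p := by omega
    have h4 : p ^ m ∣ B.natAbs := (Nat.Prime.pow_dvd_iff_le_factorization hp hn).mpr h3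
    have h5 : ((p : ℤ)) ^ m ∣ (B.natAbs : ℤ) := by exact_mod_cast Int.natCast_dvd_natCast.mpr h4
    exact h5.trans (Int.natAbs_dvd.mpr dvd_rfl)

private lemma core_lemma (l : ℕ) (hl : l.Prime) (lam k : ℕ) (hk : Odd k) (hk2 : k + 1 ≤ 2 * lam)
    (D D' : ℤ) (hD'4 : D' % 4 = 0 ∨ D' % 4 = 1) (hDD' : D = (l : ℤ) ^ (2 * lam) * D')
    (B C : ℤ) (hBC : B ^ 2 - 4 * (l : ℤ) ^ k * C = D) : (l : ℤ) ∣ B ∧ (l : ℤ) ∣ C := by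
  have hlz : (l : ℤ) ≠ 0 := by
    have := hl.one_lt; positivity
  obtain ⟨m', rfl⟩ := hk
  have hdvdD : ∀ j, j ≤ 2 * lam → (l : ℤ) ^ j ∣ D := fun j hj =>
    hDD' ▸ dvd_mul_of_dvd_left (pow_dvd_pow _ hj) _
  have hB2 : (l : ℤ) ^ (2 * m' + 1) ∣ B ^ 2 := by
    have hBsq : B ^ 2 = D + 4 * (l : ℤ) ^ (2 * m' + 1) * C := by linarith
    rw [hBsq]
    exact dvd_add (hdvdD _ (by omega)) ⟨4 * C, by ring⟩
  have hBm : (l : ℤ) ^ (m' + 1) ∣ B :=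
    prime_pow_dvd_of_dvd_sq l hl (2 * m' + 1) (m' + 1) (by omega) B hB2
  obtain ⟨B₀, hB₀⟩ := hBm
  have hlB : (l : ℤ) ∣ B := ⟨(l : ℤ) ^ m' * B₀, by rw [hB₀]; ring⟩
  refine ⟨hlB, ?_⟩
  by_cases hl2 : l = 2
  · -- l = 2 case
    subst hl2
    have h2c : ((2 : ℕ) : ℤ) = (2 : ℤ) := by norm_cast
    rw [h2c] at hB₀ hBC hDD'
    have hBC' : ((2 : ℤ) ^ (m' + 1) * B₀) ^ 2 - 4 * (2 : ℤ) ^ (2 * m' + 1) * C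
        = (2 : ℤ) ^ (2 * lam) * D' := by rw [← hB₀, ← hDD']; exact hBC
    set e : ℕ := 2 * lam - (2 * m' + 2) with he
    have key : B₀ ^ 2 - 2 * C = 2 ^ e * D' := by
      apply mul_left_cancel₀ (pow_ne_zero (2 * m' + 2) (two_ne_zero (α := ℤ)))
      calc (2 : ℤ) ^ (2 * m' + 2) * (B₀ ^ 2 - 2 * C)
          = ((2 : ℤ) ^ (m' + 1) * B₀) ^ 2 - 4 * (2 : ℤ) ^ (2 * m' + 1) * C := by ring
        _ = (2 : ℤ) ^ (2 * lam) * D' := hBC'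
        _ = (2 : ℤ) ^ (2 * m' + 2) * (2 ^ e * D') := by
            rw [← mul_assoc, ← pow_add]
            congr 2
            omega
    have hR : (2 ^ e * D') % 4 = 0 ∨ (2 ^ e * D') % 4 = 1 := by
      rcases Nat.eq_zero_or_pos e with he0 | hepos
      · rw [he0]; simpa using hD'4
      · have he2 : 2 ≤ e := by omega
        left
        have h4 : (4 : ℤ) ∣ 2 ^ e := by
          have : (2 : ℤ) ^ 2 ∣ 2 ^ e := pow_dvd_pow 2 he2
          simpa using this
        exact Int.emod_eq_zero_of_dvd (h4.mul_right D')
    have hS : B₀ ^ 2 % 4 = 0 ∨ B₀ ^ 2 % 4 = 1 := sq_emod_four B₀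
    set S := B₀ ^ 2
    set R := (2 : ℤ) ^ e * D'
    omega
  · -- l odd case
    have hodd : ¬ (l : ℤ) ∣ 2 := by
      intro hdvd
      have : l ∣ 2 := Int.ofNat_dvd.mp (by exact_mod_cast hdvd)
      exact hl2 ((Nat.prime_dvd_prime_iff_eq hl Nat.prime_two).mp this)
    have hsq : (l : ℤ) ^ (2 * m' + 2) ∣ B ^ 2 := ⟨B₀ ^ 2, by rw [hB₀]; ring⟩
    have hsub : (l : ℤ) ^ (2 * m' + 2) ∣ B ^ 2 - D := dvd_sub hsq (hdvdD _ (by omega))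
    obtain ⟨t, ht⟩ := hsub
    have ht' : (l : ℤ) ^ (2 * m' + 1) * (4 * C) = (l : ℤ) ^ (2 * m' + 1) * ((l : ℤ) * t) := by
      have h1 : B ^ 2 - D = 4 * (l : ℤ) ^ (2 * m' + 1) * C := by linarith
      calc (l : ℤ) ^ (2 * m' + 1) * (4 * C) = 4 * (l : ℤ) ^ (2 * m' + 1) * C := by ring
        _ = (l : ℤ) ^ (2 * m' + 2) * t := by rw [← h1]; exact ht
        _ = (l : ℤ) ^ (2 * m' + 1) * ((l : ℤ) * t) := by ring
    have h4C : (l : ℤ) ∣ 4 * C := ⟨t, mul_left_cancel₀ (pow_ne_zero _ hlz) ht'⟩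
    have hlprime : Prime (l : ℤ) := Nat.prime_iff_prime_int.mp hl
    rcases hlprime.dvd_mul.mp h4C with h4 | hC
    · exfalso
      apply hodd
      have : (4 : ℤ) = 2 ^ 2 := by norm_num
      exact hlprime.dvd_of_dvd_pow (this ▸ h4)
    · exact hC

private lemma main_aux (l : ℕ) (hl : l.Prime) (lam : ℕ) (D D' : ℤ)
    (hD'4 : D' % 4 = 0 ∨ D' % 4 = 1) (hDD' : D = (l : ℤ) ^ (2 * lam) * D')
    (a b c : ℤ) (hprim : Int.gcd a (Int.gcd b c) = 1) (hdisc : b ^ 2 - 4 * a * c = D) :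
    ∀ h : ℕ, Odd h → h + 1 ≤ 2 * lam →
      ∀ x y : ℤ, a * x ^ 2 + b * x * y + c * y ^ 2 ≠ (l : ℤ) ^ h := by
  intro h
  induction h using Nat.strong_induction_on with
  | _ h ih =>
    intro hodd hle x y heq
    have hl1 : 1 < l := hl.one_lt
    have hlz : (l : ℤ) ≠ 0 := by positivity
    by_cases hxy : (l : ℤ) ∣ x ∧ (l : ℤ) ∣ y
    · obtain ⟨⟨x', rfl⟩, ⟨y', rfl⟩⟩ := hxy
      have heq' : (l : ℤ) ^ 2 * (a * x' ^ 2 + b * x' * y' + c * y' ^ 2) = (l : ℤ) ^ h := by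
        rw [← heq]; ring
      obtain ⟨j, rfl⟩ := hodd
      rcases Nat.eq_zero_or_pos j with hj0 | hjpos
      · -- h = 1
        subst hj0
        simp only [Nat.mul_zero, Nat.zero_add, pow_one] at heq'
        have hcancel : (l : ℤ) * ((l : ℤ) * (a * x' ^ 2 + b * x' * y' + c * y' ^ 2)) =
            (l : ℤ) * 1 := by linear_combination heq'
        have h1 : (l : ℤ) * (a * x' ^ 2 + b * x' * y' + c * y' ^ 2) = 1 :=
          mul_left_cancel₀ hlz hcancel
        have hdvd1 : (l : ℤ) ∣ 1 := ⟨_, h1.symm⟩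
        have := Int.le_of_dvd one_pos hdvd1
        omega
      · -- h ≥ 3
        have heq'' : a * x' ^ 2 + b * x' * y' + c * y' ^ 2 = (l : ℤ) ^ (2 * j + 1 - 2) := by
          apply mul_left_cancel₀ (pow_ne_zero 2 hlz)
          rw [heq', ← pow_add]
          congr 1
          omega
        exact ih (2 * j + 1 - 2) (by omega) ⟨j - 1, by omega⟩ (by omega) x' y' heq''
    · have hg : Int.gcd x y = 1 := by
        by_contra hg1
        have hx0 : ¬(x = 0 ∧ y = 0) := by
          rintro ⟨rfl, rfl⟩
          simp only [mul_zero, zero_pow, ne_eq, OfNat.ofNat_ne_zero, not_false_eq_true,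
            mul_zero, add_zero, zero_add] at heq
          exact pow_ne_zero h hlz (by linarith)
        obtain ⟨p, hp, hpg⟩ := Nat.exists_prime_and_dvd hg1
        have hgx : (↑(Int.gcd x y) : ℤ) ∣ x := Int.gcd_dvd_left x y
        have hgy : (↑(Int.gcd x y) : ℤ) ∣ y := Int.gcd_dvd_right x y
        have hpz : (p : ℤ) ∣ (↑(Int.gcd x y) : ℤ) := Int.natCast_dvd_natCast.mpr hpg
        have hpx : (p : ℤ) ∣ x := hpz.trans hgx
        have hpy : (p : ℤ) ∣ y := hpz.trans hgy
        obtain ⟨x'', hx''⟩ := hpx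
        obtain ⟨y'', hy''⟩ := hpy
        have hp2 : (p : ℤ) ^ 2 ∣ (l : ℤ) ^ h := by
          rw [← heq, hx'', hy'']
          exact ⟨a * x'' ^ 2 + b * x'' * y'' + c * y'' ^ 2, by ring⟩
        have hpl : (p : ℤ) ∣ (l : ℤ) ^ h := (dvd_pow_self (p : ℤ) two_ne_zero).trans hp2
        have hpln : p ∣ l ^ h := by exact_mod_cast hpl
        have : p = l := (Nat.prime_dvd_prime_iff_eq hp hl).mp (hp.dvd_of_dvd_pow hpln)
        subst this
        exact hxy ⟨⟨x'', hx''⟩, ⟨y'', hy''⟩⟩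
      obtain ⟨s, t, hst⟩ := Int.isCoprime_iff_gcd_eq_one.mpr hg
      set u : ℤ := -t with hu
      set v : ℤ := s with hv
      have hdet : x * v - y * u = 1 := by rw [hu, hv]; linear_combination hst
      set B : ℤ := 2 * a * x * u + b * (x * v + y * u) + 2 * c * y * v with hB
      set C2 : ℤ := a * u ^ 2 + b * u * v + c * v ^ 2 with hC2
      have hBC : B ^ 2 - 4 * (l : ℤ) ^ h * C2 = D := by
        have hid : B ^ 2 - 4 * (a * x ^ 2 + b * x * y + c * y ^ 2) * C2
            = (x * v - y * u) ^ 2 * (b ^ 2 - 4 * a * c) := by rw [hB, hC2]; ring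
        rw [heq, hdet, hdisc] at hid
        simpa using hid
      obtain ⟨hlB, hlC⟩ := core_lemma l hl lam h hodd hle D D' hD'4 hDD' B C2 hBC
      have hlA : (l : ℤ) ∣ a * x ^ 2 + b * x * y + c * y ^ 2 := by
        rw [heq]
        exact dvd_pow_self _ hodd.pos.ne'
      set A : ℤ := a * x ^ 2 + b * x * y + c * y ^ 2 with hA
      have hda : (l : ℤ) ∣ a := by
        have hid : a = A * v ^ 2 - B * (v * y) + C2 * y ^ 2 := by
          have h0 : a * (x * v - y * u) ^ 2 = A * v ^ 2 - B * (v * y) + C2 * y ^ 2 := by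
            rw [hA, hB, hC2]; ring
          rw [hdet] at h0; linarith
        rw [hid]
        exact dvd_add (dvd_sub (hlA.mul_right _) (hlB.mul_right _)) (hlC.mul_right _)
      have hdb : (l : ℤ) ∣ b := by
        have hid : b = -(2 * (A * (u * v))) + B * (x * v + y * u) - 2 * (C2 * (x * y)) := by
          have h0 : b * (x * v - y * u) ^ 2
              = -(2 * (A * (u * v))) + B * (x * v + y * u) - 2 * (C2 * (x * y)) := by
            rw [hA, hB, hC2]; ring
          rw [hdet] at h0; linarith
        rw [hid]
        exact dvd_sub (dvd_add (dvd_neg.mpr ((hlA.mul_right _).mul_left 2)) (hlB.mul_right _))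
          ((hlC.mul_right _).mul_left 2)
      have hdc : (l : ℤ) ∣ c := by
        have hid : c = A * u ^ 2 - B * (x * u) + C2 * x ^ 2 := by
          have h0 : c * (x * v - y * u) ^ 2 = A * u ^ 2 - B * (x * u) + C2 * x ^ 2 := by
            rw [hA, hB, hC2]; ring
          rw [hdet] at h0; linarith
        rw [hid]
        exact dvd_add (dvd_sub (hlA.mul_right _) (hlB.mul_right _)) (hlC.mul_right _)
      have hgbc : (l : ℤ) ∣ (↑(Int.gcd b c) : ℤ) := Int.dvd_coe_gcd hdb hdc
      have hgabc : (l : ℤ) ∣ (↑(Int.gcd a (Int.gcd b c)) : ℤ) := Int.dvd_coe_gcd hda hgbc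
      rw [hprim] at hgabc
      have : (l : ℤ) ≤ 1 := Int.le_of_dvd one_pos (by simpa using hgabc)
      omega

theorem no_small_odd_prime_power_repr (l : ℕ) (hl : l.Prime) (lam : ℕ) (hlam : 0 < lam)
    (D D' : ℤ) (hDneg : D < 0) (hD'neg : D' < 0)
    (hD4 : D % 4 = 0 ∨ D % 4 = 1) (hD'4 : D' % 4 = 0 ∨ D' % 4 = 1)
    (hDD' : D = (l : ℤ) ^ (2 * lam) * D')
    (a b c : ℤ) (hprim : Int.gcd a (Int.gcd b c) = 1) (ha : 0 < a)
    (hdisc : b ^ 2 - 4 * a * c = D)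
    (h : ℕ) (hodd : Odd h) (h1 : 1 ≤ h) (h2 : h < 2 * lam + 1) :
    ¬∃ x y : ℤ, a * x ^ 2 + b * x * y + c * y ^ 2 = (l : ℤ) ^ h := by
  rintro ⟨x, y, hxy⟩
  have hle : h + 1 ≤ 2 * lam := by
    obtain ⟨j, rfl⟩ := hodd
    omega
  exact main_aux l hl lam D D' hD'4 hDD' a b c hprim hdisc h hodd hle x y hxy
end

section
/- For every positive integer m, the equation m = 2x^2 + 2xy + 3y^2 has a solution in integers x, y if and only if both of the following hold: (1) for every prime q with q ≡ 11, 13, 17, or 19 (mod 20), the q-adic valuation of m is even; and (2) the sum of the 2-adic valuation of m and the total number of prime factors of m (counted with multiplicity) congruent to 3 or 7 mod 20 is odd. -/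
lemma legendre_neg_five (p : ℕ) [Fact p.Prime] (h2 : p ≠ 2) (h5 : p ≠ 5) :
    (IsSquare (-5 : ZMod p) ↔ (p % 20 = 1 ∨ p % 20 = 3 ∨ p % 20 = 7 ∨ p % 20 = 9)) := by
  have hp := Fact.out (p := p.Prime)
  have h50 : ((-5 : ℤ) : ZMod p) ≠ 0 := by
    simp only [Int.cast_neg, ne_eq, neg_eq_zero]
    intro h
    have hd : (p : ℕ) ∣ 5 :=
      (ZMod.natCast_eq_zero_iff 5 p).mp (by exact_mod_cast h)
    exact h5 ((Nat.prime_dvd_prime_iff_eq hp (by norm_num)).mp hd)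
  have key : legendreSym p (-5) = 1 ↔ IsSquare (-5 : ZMod p) := by
    have := legendreSym.eq_one_iff p h50
    rwa [show (((-5 : ℤ)) : ZMod p) = (-5 : ZMod p) by push_cast; ring] at this
  haveI : Fact (Nat.Prime 5) := ⟨by norm_num⟩
  have hmul : legendreSym p (-5) = legendreSym p (-1) * legendreSym p 5 := by
    rw [show (-5 : ℤ) = -1 * 5 by ring, legendreSym.mul]
  have hrec : legendreSym p 5 = legendreSym 5 p := by
    have := legendreSym.quadratic_reciprocity_one_mod_four (p := 5) (q := p) (by norm_num) h2
    exact_mod_cast this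
  have hmod : legendreSym 5 (p : ℤ) = legendreSym 5 ((p % 5 : ℕ) : ℤ) := by
    rw [legendreSym.mod]
    norm_cast
  have hneg1 : legendreSym p (-1) = ZMod.χ₄ p := legendreSym.at_neg_one h2
  have hp4 : p % 4 = 1 ∨ p % 4 = 3 := by
    have := (Nat.Prime.mod_two_eq_one_iff_ne_two (p := p) hp).mpr h2
    omega
  have hp5 : p % 5 = 1 ∨ p % 5 = 2 ∨ p % 5 = 3 ∨ p % 5 = 4 := by
    have : ¬ (5 ∣ p) := fun hd => h5 ((Nat.prime_dvd_prime_iff_eq (by norm_num) hp).mp hd).symm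
    omega
  have hχ : ZMod.χ₄ p = if p % 4 = 1 then 1 else -1 := by
    rcases hp4 with h | h
    · rw [ZMod.χ₄_nat_one_mod_four h]; simp [h]
    · rw [ZMod.χ₄_nat_three_mod_four h]; simp [h]
  rw [← key, hmul, hneg1, hrec, hmod, hχ]
  rcases hp4 with h4 | h4 <;> rcases hp5 with h5' | h5' | h5' | h5' <;>
    rw [h4, h5'] <;> norm_num <;> omega

def Srep (n : ℕ) : Prop := ∃ a b : ℤ, (n : ℤ) = a ^ 2 + 5 * b ^ 2

lemma Srep_mul {m n : ℕ} (hm : Srep m) (hn : Srep n) : Srep (m * n) := by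
  obtain ⟨a, b, ha⟩ := hm
  obtain ⟨c, d, hc⟩ := hn
  exact ⟨a * c + 5 * b * d, a * d - b * c, by push_cast [ha, hc]; ring⟩

-- if A^2+5B^2 is even then A and B have the same parity
lemma shift2 {A B n : ℤ} (h : A ^ 2 + 5 * B ^ 2 = 2 * n) : ∃ s, A = B + 2 * s := by
  rcases Int.even_or_odd A with ⟨k, hk⟩ | ⟨k, hk⟩ <;>
    rcases Int.even_or_odd B with ⟨l, hl⟩ | ⟨l, hl⟩
  · exact ⟨k - l, by omega⟩
  · exfalso
    have h2 : 4 * (k * k) + (20 * (l * l) + 20 * l + 5) = 2 * n := by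
      rw [hk, hl] at h; linear_combination h
    generalize k * k = K at h2
    generalize l * l = L at h2
    omega
  · exfalso
    have h2 : (4 * (k * k) + 4 * k + 1) + 20 * (l * l) = 2 * n := by
      rw [hk, hl] at h; linear_combination h
    generalize k * k = K at h2
    generalize l * l = L at h2
    omega
  · exact ⟨k - l, by omega⟩

-- product of two numbers "represented by the second form"
lemma T_mul {m n : ℕ} (hm : Srep (2 * m)) (hn : Srep (2 * n)) : Srep (m * n) := by
  obtain ⟨A, B, hA⟩ := hm
  obtain ⟨C, D, hC⟩ := hn
  push_cast at hA hC
  obtain ⟨s, hs⟩ := shift2 hA.symm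
  obtain ⟨t, ht⟩ := shift2 hC.symm
  refine ⟨-2 * B * D + B * t + s * D + 2 * s * t, B * D + s * D + B * t, ?_⟩
  have key : (2 * (m : ℤ)) * (2 * n) = (A * C - 5 * B * D) ^ 2 + 5 * (A * D + B * C) ^ 2 := by
    rw [hA, hC]; ring
  push_cast
  rw [hs, ht] at key
  apply mul_left_cancel₀ (a := (4 : ℤ)) (by norm_num)
  linear_combination key

lemma quarter {m : ℕ} {a b : ℤ} (h : ((4 * m : ℕ) : ℤ) = a ^ 2 + 5 * b ^ 2) : Srep m := by
  push_cast at h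
  rcases Int.even_or_odd a with ⟨k, hk⟩ | ⟨k, hk⟩ <;>
    rcases Int.even_or_odd b with ⟨l, hl⟩ | ⟨l, hl⟩
  · refine ⟨k, l, ?_⟩
    apply mul_left_cancel₀ (a := (4 : ℤ)) (by norm_num)
    rw [hk, hl] at h
    linear_combination h
  · exfalso
    have h2 : 4 * (m : ℤ) = 4 * (k * k) + (20 * (l * l) + 20 * l + 5) := by
      rw [hk, hl] at h; linear_combination h
    generalize k * k = K at h2
    generalize l * l = L at h2
    omega
  · exfalso
    have h2 : 4 * (m : ℤ) = (4 * (k * k) + 4 * k + 1) + 20 * (l * l) := by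
      rw [hk, hl] at h; linear_combination h
    generalize k * k = K at h2
    generalize l * l = L at h2
    omega
  · exfalso
    have h2 : 4 * (m : ℤ) = (4 * (k * k) + 4 * k + 1) + (20 * (l * l) + 20 * l + 5) := by
      rw [hk, hl] at h; linear_combination h
    generalize k * k = K at h2
    generalize l * l = L at h2
    omega

-- Euler-style descent step
lemma euler_step {p m k : ℕ} (hp : p.Prime) {a b c d : ℤ}
    (h1 : ((p * m : ℕ) : ℤ) = a ^ 2 + 5 * b ^ 2)
    (h2 : ((k * p : ℕ) : ℤ) = c ^ 2 + 5 * d ^ 2) :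
    Srep (k * m) := by
  push_cast at h1 h2
  have hprime : Prime (p : ℤ) := Nat.prime_iff_prime_int.mp hp
  have hpz : (p : ℤ) ∣ (a * d - b * c) * (a * d + b * c) := by
    have hid : (a * d - b * c) * (a * d + b * c)
        = d ^ 2 * ((p : ℤ) * m) - b ^ 2 * ((k : ℤ) * p) := by
      rw [h1, h2]; ring
    rw [hid]
    exact dvd_sub ⟨d ^ 2 * m, by ring⟩ ⟨b ^ 2 * k, by ring⟩
  have hpn : (p : ℤ) ^ 2 ≠ 0 := pow_ne_zero _ (Int.natCast_ne_zero.mpr hp.pos.ne')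
  rcases hprime.dvd_or_dvd hpz with ⟨v, hv⟩ | ⟨v, hv⟩
  · have hsq : (a * c + 5 * b * d) ^ 2 = (p : ℤ) * (m * k * p - 5 * p * v ^ 2) := by
      have : (a * c + 5 * b * d) ^ 2
          = ((p : ℤ) * m) * ((k : ℤ) * p) - 5 * (a * d - b * c) ^ 2 := by
        rw [h1, h2]; ring
      rw [this, hv]; ring
    obtain ⟨u, hu⟩ := hprime.dvd_of_dvd_pow (Dvd.intro _ hsq.symm)
    refine ⟨u, v, ?_⟩
    push_cast
    apply mul_left_cancel₀ hpn
    have : (p : ℤ) ^ 2 * ((k : ℤ) * m) = ((p : ℤ) * m) * ((k : ℤ) * p) := by ring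
    rw [this, h1, h2]
    have e1 : (a ^ 2 + 5 * b ^ 2) * (c ^ 2 + 5 * d ^ 2)
        = (a * c + 5 * b * d) ^ 2 + 5 * (a * d - b * c) ^ 2 := by ring
    rw [e1, hu, hv]; ring
  · have hsq : (a * c - 5 * b * d) ^ 2 = (p : ℤ) * (m * k * p - 5 * p * v ^ 2) := by
      have : (a * c - 5 * b * d) ^ 2
          = ((p : ℤ) * m) * ((k : ℤ) * p) - 5 * (a * d + b * c) ^ 2 := by
        rw [h1, h2]; ring
      rw [this, hv]; ring
    obtain ⟨u, hu⟩ := hprime.dvd_of_dvd_pow (Dvd.intro _ hsq.symm)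
    refine ⟨u, v, ?_⟩
    push_cast
    apply mul_left_cancel₀ hpn
    have : (p : ℤ) ^ 2 * ((k : ℤ) * m) = ((p : ℤ) * m) * ((k : ℤ) * p) := by ring
    rw [this, h1, h2]
    have e1 : (a ^ 2 + 5 * b ^ 2) * (c ^ 2 + 5 * d ^ 2)
        = (a * c - 5 * b * d) ^ 2 + 5 * (a * d + b * c) ^ 2 := by ring
    rw [e1, hu, hv]; ring

-- mod transfer: from integer equation to constraint on n % k
lemma mod_constraint {n : ℕ} {a b : ℤ} (k : ℕ) [NeZero k]
    (h : (n : ℤ) = a ^ 2 + 5 * b ^ 2) :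
    ∃ x y : ZMod k, (x ^ 2 + 5 * y ^ 2).val = n % k := by
  refine ⟨(a : ZMod k), (b : ZMod k), ?_⟩
  have : ((n : ℤ) : ZMod k) = (a : ZMod k) ^ 2 + 5 * (b : ZMod k) ^ 2 := by
    rw [h]; push_cast; ring
  rw [Int.cast_natCast] at this
  rw [← this, ZMod.val_natCast]

-- a prime (other than 2, 5) represented by x^2+5y^2 is 1 or 9 mod 20
lemma Smod {p : ℕ} (hp : p.Prime) (h2 : p ≠ 2) (h5 : p ≠ 5) {a b : ℤ}
    (h : (p : ℤ) = a ^ 2 + 5 * b ^ 2) : p % 20 = 1 ∨ p % 20 = 9 := by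
  obtain ⟨x, y, h4⟩ := mod_constraint 4 h
  obtain ⟨x', y', h5'⟩ := mod_constraint 5 h
  have e4 : ∀ x y : ZMod 4, (x ^ 2 + 5 * y ^ 2).val ≠ 3 := by decide
  have e5 : ∀ x y : ZMod 5, (x ^ 2 + 5 * y ^ 2).val ≠ 2 ∧ (x ^ 2 + 5 * y ^ 2).val ≠ 3 := by decide
  have o1 := e4 x y
  have o2 := (e5 x' y').1
  have o3 := (e5 x' y').2
  have hodd : p % 2 = 1 := hp.eq_two_or_odd.resolve_left h2
  have hne5 : p % 5 ≠ 0 := by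
    intro hd
    exact h5 ((Nat.prime_dvd_prime_iff_eq (by norm_num) hp).mp (by omega)).symm
  have c4 : p % 4 = 1 := by omega
  have c5 : p % 5 = 1 ∨ p % 5 = 4 := by omega
  omega

-- a prime p (other than 2, 5) with 2p represented by x^2+5y^2 is 3 or 7 mod 20
lemma Tmod {p : ℕ} (hp : p.Prime) (h2 : p ≠ 2) (h5 : p ≠ 5) {a b : ℤ}
    (h : ((2 * p : ℕ) : ℤ) = a ^ 2 + 5 * b ^ 2) : p % 20 = 3 ∨ p % 20 = 7 := by
  obtain ⟨x, y, h8⟩ := mod_constraint 8 h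
  obtain ⟨x', y', h5'⟩ := mod_constraint 5 h
  have e8 : ∀ x y : ZMod 8, (x ^ 2 + 5 * y ^ 2).val ≠ 2 := by decide
  have e5 : ∀ x y : ZMod 5, (x ^ 2 + 5 * y ^ 2).val ≠ 2 ∧ (x ^ 2 + 5 * y ^ 2).val ≠ 3 := by decide
  have o1 := e8 x y
  have o2 := (e5 x' y').1
  have o3 := (e5 x' y').2
  have hodd : p % 2 = 1 := hp.eq_two_or_odd.resolve_left h2
  have hne5 : p % 5 ≠ 0 := by
    intro hd
    exact h5 ((Nat.prime_dvd_prime_iff_eq (by norm_num) hp).mp (by omega)).symm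
  have c4 : p % 4 = 3 := by omega
  have c5 : p % 5 = 2 ∨ p % 5 = 3 := by omega
  omega

-- Thue's lemma setup
lemma thue (p : ℕ) [Fact p.Prime] (z : ZMod p) :
    ∃ a b : ℤ, ((a : ZMod p) = z * (b : ZMod p)) ∧ a.natAbs ≤ Nat.sqrt p ∧
      b.natAbs ≤ Nat.sqrt p ∧ (a ≠ 0 ∨ b ≠ 0) := by
  set r := Nat.sqrt p with hr
  have hcard : Fintype.card (ZMod p) < Fintype.card (Fin (r + 1) × Fin (r + 1)) := by
    rw [ZMod.card, Fintype.card_prod, Fintype.card_fin]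
    have := Nat.lt_succ_sqrt p
    nlinarith [Nat.sqrt_le p]
  obtain ⟨u, v, huv, hfeq⟩ := Fintype.exists_ne_map_eq_of_card_lt
    (fun x : Fin (r + 1) × Fin (r + 1) => ((x.1 : ℕ) : ZMod p) - z * ((x.2 : ℕ) : ZMod p)) hcard
  refine ⟨(u.1 : ℕ) - (v.1 : ℕ), (u.2 : ℕ) - (v.2 : ℕ), ?_, ?_, ?_, ?_⟩
  · have hfeq' : ((u.1 : ℕ) : ZMod p) - z * ((u.2 : ℕ) : ZMod p)
        = ((v.1 : ℕ) : ZMod p) - z * ((v.2 : ℕ) : ZMod p) := hfeq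
    push_cast
    linear_combination hfeq'
  · have h1 : (u.1 : ℕ) ≤ r := Nat.lt_succ_iff.mp u.1.isLt
    have h2 : (v.1 : ℕ) ≤ r := Nat.lt_succ_iff.mp v.1.isLt
    omega
  · have h1 : (u.2 : ℕ) ≤ r := Nat.lt_succ_iff.mp u.2.isLt
    have h2 : (v.2 : ℕ) ≤ r := Nat.lt_succ_iff.mp v.2.isLt
    omega
  · by_contra hc
    push_neg at hc
    obtain ⟨ha, hb⟩ := hc
    apply huv
    have e1 : (u.1 : ℕ) = (v.1 : ℕ) := by omega
    have e2 : (u.2 : ℕ) = (v.2 : ℕ) := by omega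
    exact Prod.ext (Fin.ext e1) (Fin.ext e2)

lemma five_dvd {a b : ℤ} (h : (5 : ℤ) ∣ a ^ 2 + 5 * b ^ 2) : (5 : ℤ) ∣ a := by
  haveI : Fact (Nat.Prime 5) := ⟨by norm_num⟩
  have h' : ((a : ZMod 5)) ^ 2 + 5 * (b : ZMod 5) ^ 2 = 0 := by
    have := (ZMod.intCast_zmod_eq_zero_iff_dvd _ 5).mpr h
    push_cast at this
    linear_combination this
  have h'' : (a : ZMod 5) ^ 2 = 0 := by
    have h50 : (5 : ZMod 5) = 0 := rfl
    linear_combination h' - (b : ZMod 5) ^ 2 * h50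
  have : (a : ZMod 5) = 0 := pow_eq_zero_iff (n := 2) (by norm_num) |>.mp h''
  exact (ZMod.intCast_zmod_eq_zero_iff_dvd a 5).mp this

lemma prime_rep {p : ℕ} (hp : p.Prime) (h2 : p ≠ 2) (h5 : p ≠ 5)
    (hsq : IsSquare (-5 : ZMod p)) : Srep p ∨ Srep (2 * p) := by
  haveI : Fact p.Prime := ⟨hp⟩
  obtain ⟨z, hz⟩ := hsq
  obtain ⟨a, b, hab, hA, hB, hnz⟩ := thue p z
  have hdvd : (p : ℤ) ∣ a ^ 2 + 5 * b ^ 2 := by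
    rw [← ZMod.intCast_zmod_eq_zero_iff_dvd]
    push_cast
    rw [hab]
    linear_combination (-((b : ZMod p)) ^ 2) * hz
  obtain ⟨k, hk⟩ := hdvd
  have hpos : 0 < a ^ 2 + 5 * b ^ 2 := by
    rcases hnz with ha | hb
    · have : 0 < a ^ 2 := by positivity
      nlinarith [sq_nonneg b]
    · have : 0 < b ^ 2 := by positivity
      nlinarith [sq_nonneg a]
  set r := Nat.sqrt p with hrdef
  have hrlt : r * r < p := by
    rcases Nat.lt_or_ge (r * r) p with h | h
    · exact h
    · exfalso
      have heq : r * r = p := le_antisymm (Nat.sqrt_le p) h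
      rcases (Nat.Prime.eq_one_or_self_of_dvd hp r ⟨r, heq.symm⟩) with h1 | h1
      · rw [h1] at heq; have := hp.one_lt; omega
      · rw [h1] at heq; nlinarith [hp.two_le]
  have haA : a ^ 2 ≤ (r : ℤ) * r := by
    have h1 : (a.natAbs : ℤ) ≤ r := by exact_mod_cast hA
    have h2 : a ^ 2 = (a.natAbs : ℤ) * a.natAbs := by
      rw [Int.natAbs_mul_self']; ring
    nlinarith [Int.natCast_nonneg a.natAbs]
  have hbB : b ^ 2 ≤ (r : ℤ) * r := by
    have h1 : (b.natAbs : ℤ) ≤ r := by exact_mod_cast hB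
    have h2 : b ^ 2 = (b.natAbs : ℤ) * b.natAbs := by
      rw [Int.natAbs_mul_self']; ring
    nlinarith [Int.natCast_nonneg b.natAbs]
  have hub : a ^ 2 + 5 * b ^ 2 < 6 * p := by
    have : ((r : ℤ) * r) < p := by exact_mod_cast hrlt
    nlinarith
  have hppos : (0 : ℤ) < p := by exact_mod_cast hp.pos
  have hk1 : 1 ≤ k := by nlinarith
  have hk5 : k ≤ 5 := by nlinarith
  interval_cases k
  · left; exact ⟨a, b, by linarith⟩
  · right; exact ⟨a, b, by push_cast; linarith⟩
  · -- k = 3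
    have h3 : (3 : ℤ) ∣ (a - b) * (a + b) := by
      have e : (a - b) * (a + b) = (a ^ 2 + 5 * b ^ 2) - 6 * b ^ 2 := by ring
      rw [e, hk]
      exact ⟨p - 2 * b ^ 2, by ring⟩
    rcases Int.prime_three.dvd_or_dvd h3 with ⟨v, hv⟩ | ⟨v, hv⟩
    · obtain ⟨u, hu⟩ : (3 : ℤ) ∣ a + 5 * b := ⟨v + 2 * b, by linarith⟩
      right
      refine ⟨u, v, ?_⟩
      push_cast
      have key : 6 * (a ^ 2 + 5 * b ^ 2) = (a + 5 * b) ^ 2 + 5 * (a - b) ^ 2 := by ring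
      rw [hk, hu, hv] at key
      apply mul_left_cancel₀ (show (9 : ℤ) ≠ 0 by norm_num)
      linear_combination key
    · obtain ⟨u, hu⟩ : (3 : ℤ) ∣ a - 5 * b := ⟨v - 2 * b, by linarith⟩
      right
      refine ⟨u, v, ?_⟩
      push_cast
      have key : 6 * (a ^ 2 + 5 * b ^ 2) = (a - 5 * b) ^ 2 + 5 * (a + b) ^ 2 := by ring
      rw [hk, hu, hv] at key
      apply mul_left_cancel₀ (show (9 : ℤ) ≠ 0 by norm_num)
      linear_combination key
  · -- k = 4
    left
    exact quarter (m := p) (a := a) (b := b) (by push_cast; linarith)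
  · -- k = 5
    have h5d : (5 : ℤ) ∣ a ^ 2 + 5 * b ^ 2 := by rw [hk]; exact ⟨p, by ring⟩
    obtain ⟨a1, ha1⟩ := five_dvd h5d
    left
    refine ⟨b, a1, ?_⟩
    apply mul_left_cancel₀ (show (5 : ℤ) ≠ 0 by norm_num)
    rw [ha1] at hk
    linear_combination -hk

def Qcond (n : ℕ) : Prop := ∀ q : ℕ, q.Prime →
  (q % 20 = 11 ∨ q % 20 = 13 ∨ q % 20 = 17 ∨ q % 20 = 19) → Even (n.factorization q)

noncomputable def ccount (n : ℕ) : ℕ := n.factorization 2 +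
  ∑ p ∈ n.primeFactors.filter (fun p => p % 20 = 3 ∨ p % 20 = 7), n.factorization p

lemma fact_mul {p m : ℕ} (hp : p.Prime) (hm : m ≠ 0) (q : ℕ) :
    (p * m).factorization q = m.factorization q + (if q = p then 1 else 0) := by
  rw [Nat.factorization_mul hp.pos.ne' hm, Finsupp.add_apply, hp.factorization,
    Finsupp.single_apply]
  rcases eq_or_ne q p with h | h
  · simp [h]; omega
  · simp [h, Ne.symm h]

lemma Qcond_mul {p m : ℕ} (hp : p.Prime) (hm : m ≠ 0)
    (hnb : ¬(p % 20 = 11 ∨ p % 20 = 13 ∨ p % 20 = 17 ∨ p % 20 = 19)) :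
    Qcond (p * m) ↔ Qcond m := by
  constructor <;> intro h q hq hbad <;> have hqp : q ≠ p := by rintro rfl; exact hnb hbad
  · have := h q hq hbad
    rwa [fact_mul hp hm q, if_neg hqp, add_zero] at this
  · have := h q hq hbad
    rw [fact_mul hp hm q, if_neg hqp, add_zero]
    exact this

lemma Qcond_sq {p m : ℕ} (hp : p.Prime) (hm : m ≠ 0) :
    Qcond (p * (p * m)) ↔ Qcond m := by
  have hpm : p * m ≠ 0 := Nat.mul_ne_zero hp.pos.ne' hm
  constructor <;> intro h q hq hbad <;> have h1 := fact_mul hp hpm q <;>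
    have h2 := fact_mul hp hm q
  · have := h q hq hbad
    rw [h1, h2] at this
    rcases eq_or_ne q p with hh | hh
    · simp only [if_pos hh] at this
      rw [Nat.even_iff] at this ⊢
      omega
    · simp only [if_neg hh, add_zero] at this
      exact this
  · have := h q hq hbad
    rw [h1, h2]
    rcases eq_or_ne q p with hh | hh
    · simp only [if_pos hh]
      rw [Nat.even_iff] at this ⊢
      omega
    · simp only [if_neg hh, add_zero]
      exact this

lemma sum_primeFactors_ext {n : ℕ} (hn : n ≠ 0) (s : Finset ℕ)
    (hs : n.primeFactors ⊆ s) (pred : ℕ → Prop) [DecidablePred pred] :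
    ∑ p ∈ s.filter pred, n.factorization p
      = ∑ p ∈ n.primeFactors.filter pred, n.factorization p := by
  symm
  apply Finset.sum_subset (Finset.filter_subset_filter _ hs)
  intro q hq hnq
  have : q ∉ n.primeFactors := fun hmem =>
    hnq (Finset.mem_filter.mpr ⟨hmem, (Finset.mem_filter.mp hq).2⟩)
  rw [← Nat.support_factorization] at this
  exact Finsupp.notMem_support_iff.mp this

lemma ccount_mul {p m : ℕ} (hp : p.Prime) (hm : m ≠ 0) :
    ccount (p * m) = ccount m + (if p = 2 ∨ p % 20 = 3 ∨ p % 20 = 7 then 1 else 0) := by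
  have hpm : p * m ≠ 0 := Nat.mul_ne_zero hp.pos.ne' hm
  have hsub : m.primeFactors ⊆ (p * m).primeFactors :=
    Nat.primeFactors_mono (Dvd.intro_left p rfl) hpm
  have hmem : p ∈ (p * m).primeFactors :=
    Nat.mem_primeFactors.mpr ⟨hp, Dvd.intro m rfl, hpm⟩
  unfold ccount
  rw [fact_mul hp hm 2]
  have hsum : ∑ q ∈ (p * m).primeFactors.filter (fun q => q % 20 = 3 ∨ q % 20 = 7),
      (p * m).factorization q
      = (∑ q ∈ m.primeFactors.filter (fun q => q % 20 = 3 ∨ q % 20 = 7), m.factorization q)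
        + (if p % 20 = 3 ∨ p % 20 = 7 then 1 else 0) := by
    have step1 : ∀ q ∈ (p * m).primeFactors.filter (fun q => q % 20 = 3 ∨ q % 20 = 7),
        (p * m).factorization q = m.factorization q + (if q = p then 1 else 0) :=
      fun q _ => fact_mul hp hm q
    rw [Finset.sum_congr rfl step1, Finset.sum_add_distrib]
    congr 1
    · exact sum_primeFactors_ext hm _ hsub _
    · rw [Finset.sum_ite_eq' ((p * m).primeFactors.filter _) p (fun _ => 1)]
      by_cases hpp : p % 20 = 3 ∨ p % 20 = 7
      · simp [Finset.mem_filter, hmem, hpp]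
      · simp [Finset.mem_filter, hpp]
  rw [hsum]
  by_cases h2 : p = 2
  · subst h2
    simp
    omega
  · rw [if_neg (Ne.symm h2)]
    by_cases hpp : p % 20 = 3 ∨ p % 20 = 7
    · rw [if_pos hpp, if_pos (Or.inr hpp)]
      omega
    · rw [if_neg hpp, if_neg (by tauto)]
      omega

lemma four_iff {m : ℕ} : Srep (4 * m) ↔ Srep m :=
  ⟨fun ⟨_, _, h⟩ => quarter h,
   fun h => Srep_mul (⟨2, 0, by norm_num⟩ : Srep 4) h⟩

lemma five_iff {m : ℕ} : Srep (5 * m) ↔ Srep m := by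
  constructor
  · rintro ⟨a, b, h⟩
    push_cast at h
    have hd : (5 : ℤ) ∣ a ^ 2 + 5 * b ^ 2 := ⟨m, by linarith⟩
    obtain ⟨a1, ha1⟩ := five_dvd hd
    refine ⟨b, a1, ?_⟩
    apply mul_left_cancel₀ (show (5 : ℤ) ≠ 0 by norm_num)
    rw [ha1] at h
    linarith [h]
  · exact fun h => Srep_mul (⟨0, 1, by norm_num⟩ : Srep 5) h

lemma not_Srep_two : ¬ Srep 2 := by
  rintro ⟨a, b, h⟩
  push_cast at h
  rcases eq_or_ne b 0 with hb | hb
  · rw [hb] at h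
    norm_num at h
    rcases Int.even_or_odd a with ⟨k, hk⟩ | ⟨k, hk⟩
    · have h2 : 2 = 4 * (k * k) := by rw [hk] at h; linear_combination h
      generalize k * k = K at h2
      omega
    · have h2 : 2 = 4 * (k * k) + 4 * k + 1 := by rw [hk] at h; linear_combination h
      generalize k * k = K at h2
      omega
  · have h1 : 1 ≤ |b| := Int.one_le_abs (by omega)
    have h2 : 1 ≤ b ^ 2 := by nlinarith [sq_abs b]
    nlinarith [sq_nonneg a]

lemma nonres_split {p : ℕ} (hp : p.Prime) (hns : ¬IsSquare (-5 : ZMod p)) {a b : ℤ}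
    (h : (p : ℤ) ∣ a ^ 2 + 5 * b ^ 2) : (p : ℤ) ∣ a ∧ (p : ℤ) ∣ b := by
  haveI : Fact p.Prime := ⟨hp⟩
  have h0 : (a : ZMod p) ^ 2 + 5 * (b : ZMod p) ^ 2 = 0 := by
    have := (ZMod.intCast_zmod_eq_zero_iff_dvd _ p).mpr h
    push_cast at this
    linear_combination this
  by_cases hb : (b : ZMod p) = 0
  · rw [hb] at h0
    have ha : (a : ZMod p) = 0 := by
      have : (a : ZMod p) ^ 2 = 0 := by linear_combination h0
      exact pow_eq_zero_iff (n := 2) (by norm_num) |>.mp this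
    exact ⟨(ZMod.intCast_zmod_eq_zero_iff_dvd a p).mp ha,
      (ZMod.intCast_zmod_eq_zero_iff_dvd b p).mp hb⟩
  · exfalso
    apply hns
    refine ⟨(a : ZMod p) * ((b : ZMod p))⁻¹, ?_⟩
    have hb2 : (b : ZMod p) ^ 2 ≠ 0 := pow_ne_zero _ hb
    have ha2 : (a : ZMod p) ^ 2 = -5 * (b : ZMod p) ^ 2 := by linear_combination h0
    field_simp
    linear_combination -ha2

lemma nonres_dvd_m {p m : ℕ} (hp : p.Prime) (hns : ¬IsSquare (-5 : ZMod p))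
    (h : Srep (p * m)) : p ∣ m := by
  obtain ⟨a, b, hab⟩ := h
  push_cast at hab
  obtain ⟨⟨a1, ha1⟩, ⟨b1, hb1⟩⟩ := nonres_split hp hns (a := a) (b := b) ⟨(m : ℤ), by linarith⟩
  have hpz : ((p : ℤ)) ≠ 0 := Int.natCast_ne_zero.mpr hp.pos.ne'
  have : (m : ℤ) = (p : ℤ) * (a1 ^ 2 + 5 * b1 ^ 2) := by
    apply mul_left_cancel₀ hpz
    rw [hab, ha1, hb1]
    ring
  exact_mod_cast Int.natCast_dvd_natCast.mp ⟨a1 ^ 2 + 5 * b1 ^ 2, by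
    exact_mod_cast this⟩

lemma nonres_iff {p t : ℕ} (hp : p.Prime) (hns : ¬IsSquare (-5 : ZMod p)) :
    Srep (p * (p * t)) ↔ Srep t := by
  constructor
  · rintro ⟨a, b, hab⟩
    push_cast at hab
    obtain ⟨⟨a1, ha1⟩, ⟨b1, hb1⟩⟩ := nonres_split hp hns (a := a) (b := b) ⟨(p * t : ℤ), by push_cast; linarith⟩
    have hpz : ((p : ℤ)) ^ 2 ≠ 0 := pow_ne_zero _ (Int.natCast_ne_zero.mpr hp.pos.ne')
    refine ⟨a1, b1, ?_⟩
    apply mul_left_cancel₀ hpz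
    rw [ha1, hb1] at hab
    push_cast
    linear_combination hab
  · intro h
    have := Srep_mul (⟨(p : ℤ), 0, by push_cast; ring⟩ : Srep (p * p)) h
    rwa [mul_assoc] at this

lemma parity1 {k : ℕ} : Even (k + 1) ↔ Odd k := by
  rw [Nat.even_iff, Nat.odd_iff]; omega

lemma parity2 {k : ℕ} : Odd (k + 1) ↔ Even k := by
  rw [Nat.even_iff, Nat.odd_iff]; omega

theorem main_char : ∀ n : ℕ, 0 < n →
    ((Srep n ↔ (Qcond n ∧ Even (ccount n))) ∧
     (Srep (2 * n) ↔ (Qcond n ∧ Odd (ccount n)))) := by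
  intro n
  induction n using Nat.strong_induction_on with
  | _ n IH =>
  intro hn
  rcases eq_or_lt_of_le (Nat.succ_le_of_lt hn) with h1 | h1
  · -- n = 1
    have hne : n = 1 := h1.symm
    subst hne
    constructor
    · constructor
      · intro _
        refine ⟨fun q hq _ => by simp [Nat.factorization_one], ?_⟩
        simp [ccount, Nat.factorization_one, Nat.primeFactors_one]
      · intro _
        exact ⟨1, 0, by norm_num⟩
    · constructor
      · intro h
        exact absurd (by simpa using h) not_Srep_two
      · rintro ⟨_, hodd⟩
        have h0 : ccount 1 = 0 := by
          simp [ccount, Nat.factorization_one, Nat.primeFactors_one]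
        rw [h0, Nat.odd_iff] at hodd
        omega
  · -- n ≥ 2
    have hn2 : 2 ≤ n := h1
    have hp : n.minFac.Prime := Nat.minFac_prime (by omega)
    obtain ⟨m, hm⟩ := n.minFac_dvd
    generalize hgen : n.minFac = p at hp hm
    have hm0 : m ≠ 0 := by rintro rfl; omega
    have hmpos : 0 < m := Nat.pos_of_ne_zero hm0
    have hmlt : m < n := by
      rw [hm]
      have h2 : 1 * m < p * m := (Nat.mul_lt_mul_right hmpos).mpr hp.one_lt
      omega
    have IHm := IH m hmlt hmpos
    have hpm0 : p * m ≠ 0 := by rw [← hm]; omega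
    rw [hm]
    by_cases hp2 : p = 2
    · subst hp2
      have hcc : ccount (2 * m) = ccount m + 1 := by
        rw [ccount_mul hp hm0]; norm_num
      have hQ : Qcond (2 * m) ↔ Qcond m := Qcond_mul hp hm0 (by norm_num)
      constructor
      · rw [IHm.2, hQ, hcc, parity1]
      · rw [show 2 * (2 * m) = 4 * m by ring, four_iff, IHm.1, hQ, hcc, parity2]
    · by_cases hp5 : p = 5
      · subst hp5
        have hcc : ccount (5 * m) = ccount m := by
          rw [ccount_mul hp hm0]; norm_num
        have hQ : Qcond (5 * m) ↔ Qcond m := Qcond_mul hp hm0 (by norm_num)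
        constructor
        · rw [five_iff, IHm.1, hQ, hcc]
        · rw [show 2 * (5 * m) = 5 * (2 * m) by ring, five_iff, IHm.2, hQ, hcc]
      · -- p odd, p ≠ 5
        haveI : Fact p.Prime := ⟨hp⟩
        have hodd : p % 2 = 1 := hp.eq_two_or_odd.resolve_left hp2
        have hne5 : p % 5 ≠ 0 := by
          intro hd
          exact hp5 (((Nat.prime_dvd_prime_iff_eq (by norm_num : Nat.Prime 5) hp).mp (by omega)).symm)
        have hclass : p % 20 = 1 ∨ p % 20 = 3 ∨ p % 20 = 7 ∨ p % 20 = 9 ∨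
            p % 20 = 11 ∨ p % 20 = 13 ∨ p % 20 = 17 ∨ p % 20 = 19 := by omega
        by_cases hbad : p % 20 = 11 ∨ p % 20 = 13 ∨ p % 20 = 17 ∨ p % 20 = 19
        · -- inert prime: exponent must be even
          have hns : ¬IsSquare (-5 : ZMod p) := by
            rw [legendre_neg_five p hp2 hp5]
            omega
          have hfact1 : 1 ≤ (p * m).factorization p :=
            (Nat.Prime.factorization_pos_of_dvd hp hpm0 ⟨m, rfl⟩)
          constructor
          · constructor
            · intro hS
              obtain ⟨m1, hm1⟩ := nonres_dvd_m hp hns hS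
              subst hm1
              have hm10 : m1 ≠ 0 := by rintro rfl; omega
              have hm1lt : m1 < n := by
                have : m1 < p * m1 := by nlinarith [hp.two_le, Nat.pos_of_ne_zero hm10]
                omega
              have hS1 : Srep m1 := (nonres_iff hp hns).mp hS
              have IH1 := IH m1 hm1lt (Nat.pos_of_ne_zero hm10)
              obtain ⟨hQ1, hE1⟩ := IH1.1.mp hS1
              refine ⟨(Qcond_sq hp hm10).mpr hQ1, ?_⟩
              have hcc : ccount (p * (p * m1)) = ccount m1 := by
                rw [ccount_mul hp (Nat.mul_ne_zero hp.pos.ne' hm10), ccount_mul hp hm10]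
                have : ¬(p = 2 ∨ p % 20 = 3 ∨ p % 20 = 7) := by omega
                rw [if_neg this]
                omega
              rwa [hcc]
            · rintro ⟨hQ, hE⟩
              have heven := hQ p hp hbad
              have h2le : 2 ≤ (p * m).factorization p := by
                rcases heven with ⟨c, hc⟩
                omega
              have hsq : p ^ 2 ∣ p * m :=
                (Nat.Prime.pow_dvd_iff_le_factorization hp hpm0).mpr h2le
              obtain ⟨m1, hm1⟩ : p ∣ m := by
                obtain ⟨k, hk⟩ := hsq
                refine ⟨k, ?_⟩
                have : p * m = p * (p * k) := by rw [hk]; ring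
                exact Nat.eq_of_mul_eq_mul_left hp.pos this
              subst hm1
              have hm10 : m1 ≠ 0 := by rintro rfl; omega
              have hm1lt : m1 < n := by
                have : m1 < p * m1 := by nlinarith [hp.two_le, Nat.pos_of_ne_zero hm10]
                omega
              have IH1 := IH m1 hm1lt (Nat.pos_of_ne_zero hm10)
              have hQ1 : Qcond m1 := (Qcond_sq hp hm10).mp hQ
              have hcc : ccount (p * (p * m1)) = ccount m1 := by
                rw [ccount_mul hp (Nat.mul_ne_zero hp.pos.ne' hm10), ccount_mul hp hm10]
                have : ¬(p = 2 ∨ p % 20 = 3 ∨ p % 20 = 7) := by omega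
                rw [if_neg this]
                omega
              rw [hcc] at hE
              exact (nonres_iff hp hns).mpr (IH1.1.mpr ⟨hQ1, hE⟩)
          · constructor
            · intro hS
              rw [show 2 * (p * m) = p * (2 * m) by ring] at hS
              have hd2m : p ∣ 2 * m := nonres_dvd_m hp hns hS
              have hdm : p ∣ m := by
                rcases (Nat.Prime.dvd_mul hp).mp hd2m with h | h
                · exact absurd ((Nat.prime_dvd_prime_iff_eq hp (by norm_num)).mp h) hp2
                · exact h
              obtain ⟨m1, hm1⟩ := hdm
              subst hm1
              have hm10 : m1 ≠ 0 := by rintro rfl; omega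
              have hm1lt : m1 < n := by
                have : m1 < p * m1 := by nlinarith [hp.two_le, Nat.pos_of_ne_zero hm10]
                omega
              have hS1 : Srep (2 * m1) := by
                have : Srep (p * (p * (2 * m1))) := by
                  rw [show p * (p * (2 * m1)) = p * (2 * (p * m1)) by ring]
                  exact hS
                exact (nonres_iff hp hns).mp this
              have IH1 := IH m1 hm1lt (Nat.pos_of_ne_zero hm10)
              obtain ⟨hQ1, hO1⟩ := IH1.2.mp hS1
              refine ⟨(Qcond_sq hp hm10).mpr hQ1, ?_⟩
              have hcc : ccount (p * (p * m1)) = ccount m1 := by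
                rw [ccount_mul hp (Nat.mul_ne_zero hp.pos.ne' hm10), ccount_mul hp hm10]
                have : ¬(p = 2 ∨ p % 20 = 3 ∨ p % 20 = 7) := by omega
                rw [if_neg this]
                omega
              rwa [hcc]
            · rintro ⟨hQ, hO⟩
              have heven := hQ p hp hbad
              have h2le : 2 ≤ (p * m).factorization p := by
                rcases heven with ⟨c, hc⟩
                omega
              have hsq : p ^ 2 ∣ p * m :=
                (Nat.Prime.pow_dvd_iff_le_factorization hp hpm0).mpr h2le
              obtain ⟨m1, hm1⟩ : p ∣ m := by
                obtain ⟨k, hk⟩ := hsq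
                refine ⟨k, ?_⟩
                have : p * m = p * (p * k) := by rw [hk]; ring
                exact Nat.eq_of_mul_eq_mul_left hp.pos this
              subst hm1
              have hm10 : m1 ≠ 0 := by rintro rfl; omega
              have hm1lt : m1 < n := by
                have : m1 < p * m1 := by nlinarith [hp.two_le, Nat.pos_of_ne_zero hm10]
                omega
              have IH1 := IH m1 hm1lt (Nat.pos_of_ne_zero hm10)
              have hQ1 : Qcond m1 := (Qcond_sq hp hm10).mp hQ
              have hcc : ccount (p * (p * m1)) = ccount m1 := by
                rw [ccount_mul hp (Nat.mul_ne_zero hp.pos.ne' hm10), ccount_mul hp hm10]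
                have : ¬(p = 2 ∨ p % 20 = 3 ∨ p % 20 = 7) := by omega
                rw [if_neg this]
                omega
              rw [hcc] at hO
              have hS1 : Srep (2 * m1) := IH1.2.mpr ⟨hQ1, hO⟩
              have : Srep (p * (p * (2 * m1))) := (nonres_iff hp hns).mpr hS1
              rw [show p * (p * (2 * m1)) = 2 * (p * (p * m1)) by ring] at this
              exact this
        · -- split prime
          have hsq : IsSquare (-5 : ZMod p) := by
            rw [legendre_neg_five p hp2 hp5]
            omega
          rcases prime_rep hp hp2 hp5 hsq with hrepS | hrepT
          · -- p ≡ 1, 9 mod 20 : p = a^2+5b^2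
            obtain ⟨c, d, hcd⟩ := hrepS
            have hmod := Smod hp hp2 hp5 hcd
            have key : ∀ t : ℕ, Srep (p * t) ↔ Srep t := by
              intro t
              constructor
              · rintro ⟨a, b, hab⟩
                have := euler_step (k := 1) hp hab (c := c) (d := d)
                  (by push_cast; linarith [hcd])
                rwa [one_mul] at this
              · exact fun h => Srep_mul ⟨c, d, hcd⟩ h
            have hcc : ccount (p * m) = ccount m := by
              rw [ccount_mul hp hm0]
              have : ¬(p = 2 ∨ p % 20 = 3 ∨ p % 20 = 7) := by omega
              rw [if_neg this]
              omega
            have hQ : Qcond (p * m) ↔ Qcond m := Qcond_mul hp hm0 (by omega)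
            constructor
            · rw [key, IHm.1, hQ, hcc]
            · rw [show 2 * (p * m) = p * (2 * m) by ring, key, IHm.2, hQ, hcc]
          · -- p ≡ 3, 7 mod 20 : 2p = a^2+5b^2
            obtain ⟨c, d, hcd⟩ := hrepT
            have hmod := Tmod hp hp2 hp5 hcd
            have key : ∀ t : ℕ, Srep (p * t) ↔ Srep (2 * t) := by
              intro t
              constructor
              · rintro ⟨a, b, hab⟩
                exact euler_step (k := 2) hp hab hcd
              · intro h
                exact T_mul ⟨c, d, hcd⟩ h
            have hcc : ccount (p * m) = ccount m + 1 := by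
              rw [ccount_mul hp hm0]
              have : (p = 2 ∨ p % 20 = 3 ∨ p % 20 = 7) := by omega
              rw [if_pos this]
            have hQ : Qcond (p * m) ↔ Qcond m := Qcond_mul hp hm0 (by omega)
            constructor
            · rw [key, IHm.2, hQ, hcc, parity1]
            · rw [show 2 * (p * m) = p * (2 * m) by ring, key,
                show 2 * (2 * m) = 4 * m by ring, four_iff, IHm.1, hQ, hcc, parity2]

theorem repr_by_2x2_2xy_3y2 (m : ℕ) (hm : 0 < m) :
    (∃ x y : ℤ, (m : ℤ) = 2 * x ^ 2 + 2 * x * y + 3 * y ^ 2) ↔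
      (∀ q : ℕ, q.Prime →
          (q % 20 = 11 ∨ q % 20 = 13 ∨ q % 20 = 17 ∨ q % 20 = 19) →
          Even (m.factorization q)) ∧
      Odd (m.factorization 2 +
        ∑ p ∈ m.primeFactors.filter (fun p => p % 20 = 3 ∨ p % 20 = 7),
          m.factorization p) := by
  have hmain := (main_char m hm).2
  constructor
  · rintro ⟨x, y, hxy⟩
    have hS : Srep (2 * m) := ⟨2 * x + y, y, by push_cast; linear_combination 2 * hxy⟩
    exact hmain.mp hS
  · intro h
    obtain ⟨a, b, hab⟩ := hmain.mpr h
    push_cast at hab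
    obtain ⟨s, hs⟩ := shift2 hab.symm
    refine ⟨s, b, ?_⟩
    apply mul_left_cancel₀ (show (2 : ℤ) ≠ 0 by norm_num)
    rw [hs] at hab
    linear_combination hab
end

section
/- For every positive integer m, the equation m = 4x^2 + 4xy + 5y^2 has a solution in integers x, y if and only if both of the following hold: (1) for every prime q with q ≡ 3 or 7 (mod 8), the q-adic valuation of m is even; and (2) either (a) m is odd and the total number of prime factors of m (counted with multiplicity) congruent to 5 mod 8 is odd, or (b) the 2-adic valuation of m equals 2, or (c) the 2-adic valuation of m is at least 4. -/
lemma sq_mod_two' (u : ℕ) : u ^ 2 % 2 = u % 2 := by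
  rcases Nat.even_or_odd u with ⟨k, hk⟩ | ⟨k, hk⟩ <;> subst hk
  · have : (k + k) ^ 2 = 4 * k ^ 2 := by ring
    omega
  · have : (2 * k + 1) ^ 2 = 4 * (k ^ 2 + k) + 1 := by ring
    omega

lemma sq_mod_four' (u : ℕ) : u ^ 2 % 4 = u % 2 := by
  rcases Nat.even_or_odd u with ⟨k, hk⟩ | ⟨k, hk⟩ <;> subst hk
  · have : (k + k) ^ 2 = 4 * k ^ 2 := by ring
    omega
  · have : (2 * k + 1) ^ 2 = 4 * (k ^ 2 + k) + 1 := by ring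
    omega

-- sum of two squares with factorization-style hypothesis
lemma two_sq_of (n : ℕ)
    (h : ∀ q : ℕ, q.Prime → (q % 8 = 3 ∨ q % 8 = 7) → Even (n.factorization q)) :
    ∃ u v : ℕ, n = u ^ 2 + v ^ 2 :=
  Nat.eq_sq_add_sq_iff.mpr (fun {q} hq h4 => by
    rw [← Nat.factorization_def _ (Nat.prime_of_mem_primeFactors hq)]; exact h q (Nat.prime_of_mem_primeFactors hq) (by omega))

-- builder for the odd case
lemma build_odd (m u v : ℕ) (h : m = u ^ 2 + v ^ 2) (hm8 : m % 8 = 5)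
    (hv : v % 8 = 2 ∨ v % 8 = 6) :
    ∃ x y : ℤ, (m : ℤ) = 4 * x ^ 2 + 4 * x * y + 5 * y ^ 2 := by
  have hu2 := sq_mod_two' u
  have hv2 := sq_mod_two' v
  have hvpar : v % 2 = 0 := by omega
  have hupar : u % 2 = 1 := by omega
  set b := v / 2 with hb
  have hvb : v = 2 * b := by omega
  have hbodd : b % 2 = 1 := by omega
  obtain ⟨x, hx⟩ : ∃ x : ℤ, (u : ℤ) = 2 * x + b := ⟨((u : ℤ) - b) / 2, by omega⟩
  refine ⟨x, (b : ℤ), ?_⟩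
  have hm' : (m : ℤ) = (u : ℤ) ^ 2 + (v : ℤ) ^ 2 := by exact_mod_cast congrArg (Nat.cast : ℕ → ℤ) h
  have hv' : (v : ℤ) = 2 * (b : ℤ) := by exact_mod_cast hvb
  rw [hm', hx, hv']
  ring

-- builder for the even cases
lemma build_even (m n u v c : ℕ) (hmn : m = 4 * n) (hn : n = u ^ 2 + v ^ 2) (hv : v = 2 * c) :
    ∃ x y : ℤ, (m : ℤ) = 4 * x ^ 2 + 4 * x * y + 5 * y ^ 2 := by
  refine ⟨(u : ℤ) - c, 2 * (c : ℤ), ?_⟩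
  have : (m : ℤ) = 4 * ((u : ℤ) ^ 2 + (2 * (c : ℤ)) ^ 2) := by
    subst hmn hn hv; push_cast; ring
  rw [this]; ring

lemma zmod8_prod (m : ℕ) (hm : m ≠ 0) (hodd : Odd m)
    (h3 : ∀ q : ℕ, q.Prime → (q % 8 = 3 ∨ q % 8 = 7) → Even (m.factorization q)) :
    (m : ZMod 8) = 5 ^ (∑ p ∈ m.primeFactors.filter (fun p => p % 8 = 5), m.factorization p) := by
  conv_lhs => rw [← Nat.factorization_prod_pow_eq_self hm]
  rw [Finsupp.prod]
  push_cast
  rw [Nat.support_factorization,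
    ← Finset.prod_filter_mul_prod_filter_not m.primeFactors (fun p => p % 8 = 5)]
  have hcast : ∀ p : ℕ, (p : ZMod 8) = ((p % 8 : ℕ) : ZMod 8) := fun p => (ZMod.natCast_mod p 8).symm
  have h2 : ∀ p ∈ m.primeFactors.filter (fun p => ¬ p % 8 = 5),
      (p : ZMod 8) ^ m.factorization p = 1 := by
    intro p hp
    rw [Finset.mem_filter] at hp
    obtain ⟨hpm, hp5⟩ := hp
    have hprime := Nat.prime_of_mem_primeFactors hpm
    have hp2 : ¬ (2 ∣ p) := by
      intro h
      have : p = 2 := ((Nat.prime_dvd_prime_iff_eq Nat.prime_two hprime).mp h).symm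
      subst this
      have := Nat.dvd_of_mem_primeFactors hpm
      rw [Nat.odd_iff] at hodd
      omega
    have h137 : p % 8 = 1 ∨ p % 8 = 3 ∨ p % 8 = 7 := by omega
    rcases h137 with h | h | h
    · rw [hcast p, h]; norm_num
    · obtain ⟨k, hk⟩ := h3 p hprime (Or.inl h)
      rw [hcast p, h, hk, ← two_mul, pow_mul]
      have : ((3 : ℕ) : ZMod 8) ^ 2 = 1 := by decide
      rw [this, one_pow]
    · obtain ⟨k, hk⟩ := h3 p hprime (Or.inr h)
      rw [hcast p, h, hk, ← two_mul, pow_mul]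
      have : ((7 : ℕ) : ZMod 8) ^ 2 = 1 := by decide
      rw [this, one_pow]
  rw [Finset.prod_eq_one h2, mul_one]
  have hc : ∀ p ∈ m.primeFactors.filter (fun p => p % 8 = 5),
      (p : ZMod 8) ^ m.factorization p = (5 : ZMod 8) ^ m.factorization p := by
    intro p hp
    rw [Finset.mem_filter] at hp
    rw [hcast p, hp.2]
    norm_num
  rw [Finset.prod_congr rfl hc, Finset.prod_pow_eq_pow_sum]

theorem repr_by_4x2_4xy_5y2 (m : ℕ) (hm : 0 < m) :
    (∃ x y : ℤ, (m : ℤ) = 4 * x ^ 2 + 4 * x * y + 5 * y ^ 2) ↔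
      (∀ q : ℕ, q.Prime → (q % 8 = 3 ∨ q % 8 = 7) → Even (m.factorization q)) ∧
      ((Odd m ∧
          Odd (∑ p ∈ m.primeFactors.filter (fun p => p % 8 = 5), m.factorization p)) ∨
        m.factorization 2 = 2 ∨ 4 ≤ m.factorization 2) := by
  set S := ∑ p ∈ m.primeFactors.filter (fun p => p % 8 = 5), m.factorization p with hS
  constructor
  · rintro ⟨x, y, hxy⟩
    -- m is a sum of two squares
    have hsum : (m : ℤ) = (2 * x + y) ^ 2 + (2 * y) ^ 2 := by rw [hxy]; ring
    have hsum' : m = (2 * x + y).natAbs ^ 2 + (2 * y).natAbs ^ 2 := by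
      have : (m : ℤ) = ((2 * x + y).natAbs : ℤ) ^ 2 + ((2 * y).natAbs : ℤ) ^ 2 := by
        rw [Int.natAbs_sq, Int.natAbs_sq]; exact hsum
      exact_mod_cast this
    have h1 : ∀ q : ℕ, q.Prime → (q % 8 = 3 ∨ q % 8 = 7) → Even (m.factorization q) := by
      intro q hq h8
      rw [Nat.factorization_def _ hq]
      by_cases hqm : q ∣ m
      · exact Nat.eq_sq_add_sq_iff.mp ⟨_, _, hsum'⟩ q (Nat.mem_primeFactors.mpr ⟨hq, hqm, hm.ne'⟩) (by omega)
      · rw [padicValNat.eq_zero_of_not_dvd hqm]; exact Even.zero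
    refine ⟨h1, ?_⟩
    rcases Int.even_or_odd y with ⟨y', hy⟩ | ⟨k, hy⟩
    · -- even case
      rcases Int.even_or_odd (x + y') with ⟨w, hz⟩ | ⟨w, hz⟩
      · -- 16 | m
        right; right
        have hx : x = w + w - y' := by omega
        have h16 : (m : ℤ) = 16 * (w ^ 2 + y' ^ 2) := by
          rw [hxy, hx, show y = y' + y' by omega]; ring
        have hdvd : (16 : ℕ) ∣ m := by
          have : ((16 : ℕ) : ℤ) ∣ (m : ℤ) := ⟨w ^ 2 + y' ^ 2, by push_cast; linarith⟩
          exact_mod_cast this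
        have h24 : (2 : ℕ) ^ 4 ∣ m := by norm_num; exact hdvd
        exact (Nat.Prime.pow_dvd_iff_le_factorization Nat.prime_two hm.ne').mp h24
      · -- v2 = 2
        right; left
        have hx : x = 2 * w + 1 - y' := by omega
        have hkey : (m : ℤ) = 8 * (2 * w ^ 2 + 2 * w + 2 * y' ^ 2) + 4 := by
          rw [hxy, hx, show y = 2 * y' by omega]; ring
        have hm8 : m % 8 = 4 := by omega
        have h4 : (2 : ℕ) ^ 2 ∣ m := by norm_num; omega
        have h8 : ¬ (2 : ℕ) ^ 3 ∣ m := by norm_num; omega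
        have hle := (Nat.Prime.pow_dvd_iff_le_factorization Nat.prime_two hm.ne').mp h4
        have hlt : ¬ 3 ≤ m.factorization 2 := fun h =>
          h8 ((Nat.Prime.pow_dvd_iff_le_factorization Nat.prime_two hm.ne').mpr h)
        omega
    · -- odd case
      left
      have hcast : (m : ZMod 8) = 4 * (x : ZMod 8) ^ 2 + 4 * (x : ZMod 8) * (y : ZMod 8)
          + 5 * (y : ZMod 8) ^ 2 := by
        have := congrArg (fun t : ℤ => (t : ZMod 8)) hxy
        push_cast at this
        exact this
      have hy8 : (y : ZMod 8) = 2 * (k : ZMod 8) + 1 := by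
        rw [hy]; push_cast; ring
      have hyodd : ((y : ZMod 8) = 1 ∨ (y : ZMod 8) = 3 ∨ (y : ZMod 8) = 5 ∨ (y : ZMod 8) = 7) := by
        have hall : ∀ K : ZMod 8, (2 * K + 1 = 1 ∨ 2 * K + 1 = 3 ∨ 2 * K + 1 = 5 ∨ 2 * K + 1 = 7) := by
          decide
        rw [hy8]
        exact hall _
      have hkey : ∀ X Y : ZMod 8, (Y = 1 ∨ Y = 3 ∨ Y = 5 ∨ Y = 7) →
          4 * X ^ 2 + 4 * X * Y + 5 * Y ^ 2 = 5 := by decide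
      have h5 : (m : ZMod 8) = 5 := by
        rw [hcast]
        exact hkey _ _ hyodd
      have hval : m % 8 = 5 := by
        have := congrArg ZMod.val h5
        rwa [ZMod.val_natCast] at this
      have hodd : Odd m := by rw [Nat.odd_iff]; omega
      have hprod := zmod8_prod m hm.ne' hodd h1
      refine ⟨hodd, ?_⟩
      rw [Nat.odd_iff]
      by_contra h
      have hev : Even S := by rw [Nat.even_iff]; omega
      obtain ⟨t, ht⟩ := hev
      rw [← hS, ht, ← two_mul, pow_mul] at hprod
      have h52 : (5 : ZMod 8) ^ 2 = 1 := by decide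
      rw [h52, one_pow, h5] at hprod
      exact absurd hprod (by decide)
  · rintro ⟨h1, hcase⟩
    rcases hcase with ⟨hodd, hSodd⟩ | h2 | h4
    · -- odd case
      obtain ⟨u, v, huv⟩ := two_sq_of m h1
      have hprod := zmod8_prod m hm.ne' hodd h1
      obtain ⟨t, ht⟩ := hSodd
      rw [← hS, ht, pow_add, pow_mul] at hprod
      have h52 : (5 : ZMod 8) ^ 2 = 1 := by decide
      rw [h52, one_pow, one_mul, pow_one] at hprod
      have hm8 : m % 8 = 5 := by
        have := congrArg ZMod.val hprod
        rwa [ZMod.val_natCast] at this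
      -- get residues of u, v mod 8
      have hcast : ∀ p : ℕ, (p : ZMod 8) = ((p % 8 : ℕ) : ZMod 8) :=
        fun p => (ZMod.natCast_mod p 8).symm
      have hz : (u : ZMod 8) ^ 2 + (v : ZMod 8) ^ 2 = 5 := by
        have := congrArg (fun t : ℕ => (t : ZMod 8)) huv
        push_cast at this
        rw [← this, hprod]
      have hdec : ∀ U V : ZMod 8, U ^ 2 + V ^ 2 = 5 →
          ((V = 2 ∨ V = 6) ∨ (U = 2 ∨ U = 6)) := by decide
      have hval : ∀ p : ℕ, ((p : ZMod 8) = 2 ∨ (p : ZMod 8) = 6) → p % 8 = 2 ∨ p % 8 = 6 := by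
        intro p hp
        rcases hp with hp | hp <;> [left; right] <;>
          · have := congrArg ZMod.val hp
            rwa [ZMod.val_natCast] at this
      rcases hdec _ _ hz with hv | hu
      · exact build_odd m u v huv hm8 (hval v hv)
      · exact build_odd m v u (by omega) hm8 (hval u hu)
    · -- v2(m) = 2
      have hdvd : (2 : ℕ) ^ 2 ∣ m :=
        (Nat.Prime.pow_dvd_iff_le_factorization Nat.prime_two hm.ne').mpr (by omega)
      have hndvd : ¬ (2 : ℕ) ^ 3 ∣ m := fun h =>
        by have := (Nat.Prime.pow_dvd_iff_le_factorization Nat.prime_two hm.ne').mp h; omega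
      norm_num at hdvd hndvd
      set n := m / 4 with hn
      have hmn : m = 4 * n := by omega
      have hn0 : n ≠ 0 := by omega
      have hnodd : n % 2 = 1 := by omega
      have h1n : ∀ q : ℕ, q.Prime → (q % 8 = 3 ∨ q % 8 = 7) → Even (n.factorization q) := by
        intro q hq h8
        have hq2 : ¬ q ∣ 4 := by
          intro hd
          have : q ∣ 2 := hq.dvd_of_dvd_pow (show q ∣ 2 ^ 2 by norm_num; exact hd)
          have := (Nat.prime_dvd_prime_iff_eq hq Nat.prime_two).mp this
          omega
        have := h1 q hq h8
        rw [hmn, Nat.factorization_mul (by norm_num) hn0, Finsupp.add_apply,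
          Nat.factorization_eq_zero_of_not_dvd hq2, zero_add] at this
        exact this
      obtain ⟨u, v, huv⟩ := two_sq_of n h1n
      have hu2 := sq_mod_two' u
      have hv2 := sq_mod_two' v
      rcases Nat.even_or_odd v with hv | hv
      · obtain ⟨c, hc⟩ := hv
        exact build_even m n u v c hmn huv (by omega)
      · have : u % 2 = 0 := by rw [Nat.odd_iff] at hv; omega
        exact build_even m n v u (u / 2) hmn (by omega) (by omega)
    · -- v2(m) >= 4
      have hdvd : (2 : ℕ) ^ 4 ∣ m :=
        (Nat.Prime.pow_dvd_iff_le_factorization Nat.prime_two hm.ne').mpr (by omega)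
      norm_num at hdvd
      set n := m / 4 with hn
      have hmn : m = 4 * n := by omega
      have hn0 : n ≠ 0 := by omega
      have hn4 : n % 4 = 0 := by omega
      have h1n : ∀ q : ℕ, q.Prime → (q % 8 = 3 ∨ q % 8 = 7) → Even (n.factorization q) := by
        intro q hq h8
        have hq2 : ¬ q ∣ 4 := by
          intro hd
          have : q ∣ 2 := hq.dvd_of_dvd_pow (show q ∣ 2 ^ 2 by norm_num; exact hd)
          have := (Nat.prime_dvd_prime_iff_eq hq Nat.prime_two).mp this
          omega
        have := h1 q hq h8
        rw [hmn, Nat.factorization_mul (by norm_num) hn0, Finsupp.add_apply,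
          Nat.factorization_eq_zero_of_not_dvd hq2, zero_add] at this
        exact this
      obtain ⟨u, v, huv⟩ := two_sq_of n h1n
      have hu4 := sq_mod_four' u
      have hv4 := sq_mod_four' v
      have hvpar : v % 2 = 0 := by omega
      exact build_even m n u v (v / 2) hmn huv (by omega)
end
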